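/- Let G = (V,E) be a finite simple graph and let C ⊆ V be such that G[C] is connected. Suppose e = {u,v} is a bridge of G[C] and let C_u and C_v be the vertex sets of the two connected components of G[C] − e containing u and v respectively, with |C_u| ≥ 2 and |C_v| ≥ 2. Then uw(C_u) + uw(C_v) ≥ uw(C), i.e., splitting the coalition C along the bridge e does not decrease the utilitarian welfare. -/

import Mathlib

open Finset

/-- The utilitarian welfare `2|E(G[C])|/|C|` of a coalition `C`: twice the number of edges
of the induced subgraph, counted as ordered adjacent pairs inside `C`, divided by `|C|`. -/
def uw {V : Type*} [DecidableEq V] (G : SimpleGraph V) [DecidableRel G.Adj]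
    (C : Finset V) : ℚ :=
  (((C ×ˢ C).filter fun p => G.Adj p.1 p.2).card : ℚ) / (C.card : ℚ)

/-- In a connected induced subgraph with at least two vertices, every vertex has a
neighbor inside the coalition. -/
lemma exists_neighbor_of_connected {V : Type*} [DecidableEq V] (G : SimpleGraph V)
    (X : Finset V) (hX : 2 ≤ X.card) (hconn : (G.induce (X : Set V)).Connected)
    {x : V} (hx : x ∈ X) : ∃ y, y ∈ X ∧ G.Adj x y := by
  obtain ⟨z, hz, hzx⟩ := Finset.exists_mem_ne hX x
  have hreach : (G.induce (X : Set V)).Reachable ⟨x, by simpa using hx⟩ ⟨z, by simpa using hz⟩ :=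
    hconn.preconnected _ _
  obtain ⟨p⟩ := hreach
  have hnil : ¬ p.Nil := by
    intro h
    have := h.eq
    simp only [Subtype.mk.injEq] at this
    exact hzx this.symm
  have hadj := p.adj_snd hnil
  refine ⟨((p.getVert 1 : (X : Set V)) : V), by simpa using (p.getVert 1).2, ?_⟩
  simpa [SimpleGraph.comap_adj] using hadj

/-- A connected coalition has at least as many ordered adjacent pairs as vertices. -/
lemma card_le_card_adjPairs {V : Type*} [DecidableEq V] (G : SimpleGraph V)
    [DecidableRel G.Adj] (X : Finset V) (hX : 2 ≤ X.card)
    (hconn : (G.induce (X : Set V)).Connected) :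
    X.card ≤ ((X ×ˢ X).filter fun p => G.Adj p.1 p.2).card := by
  classical
  have h : ∀ x ∈ X, ∃ y, y ∈ X ∧ G.Adj x y :=
    fun x hx => exists_neighbor_of_connected G X hX hconn hx
  apply Finset.card_le_card_of_injOn
    (fun x => (x, if hx : x ∈ X then Classical.choose (h x hx) else x))
  · intro x hx
    rw [Finset.mem_coe] at hx
    simp only [hx, dif_pos]
    have := Classical.choose_spec (h x hx)
    simp only [Finset.mem_coe, Finset.mem_filter, Finset.mem_product]
    exact ⟨⟨hx, this.1⟩, this.2⟩
  · intro x _ y _ hxy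
    exact congrArg Prod.fst hxy

/-- The key arithmetic inequality. -/
lemma uw_arith (a b m n : ℚ) (hm : 2 ≤ m) (hn : 2 ≤ n) (ham : m ≤ a) (hbn : n ≤ b) :
    (a + b + 2) / (m + n) ≤ a / m + b / n := by
  have hm0 : (0 : ℚ) < m := by linarith
  have hn0 : (0 : ℚ) < n := by linarith
  rw [div_add_div _ _ hm0.ne' hn0.ne', div_le_div_iff₀ (by linarith) (by positivity)]
  nlinarith [mul_pos hm0 hn0, mul_nonneg (sub_nonneg.mpr ham) (mul_self_nonneg n),
    mul_nonneg (sub_nonneg.mpr hbn) (mul_self_nonneg m)]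

theorem bridge_split_does_not_decrease_uw
    {V : Type*} [Fintype V] [DecidableEq V] (G : SimpleGraph V) [DecidableRel G.Adj]
    (C Cu Cv : Finset V) (u v : V)
    (hconn : (G.induce (C : Set V)).Connected)
    (hu : u ∈ Cu) (hv : v ∈ Cv) (huv : G.Adj u v)
    (hdisj : Disjoint Cu Cv) (hunion : Cu ∪ Cv = C)
    (hCu : 2 ≤ Cu.card) (hCv : 2 ≤ Cv.card)
    (hconnu : (G.induce (Cu : Set V)).Connected)
    (hconnv : (G.induce (Cv : Set V)).Connected)
    (hbridge : ∀ x ∈ Cu, ∀ y ∈ Cv, G.Adj x y → x = u ∧ y = v) :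
    uw G C ≤ uw G Cu + uw G Cv := by
  classical
  set P : V × V → Prop := fun p => G.Adj p.1 p.2 with hP
  -- the cross filters are singletons
  have hcross1 : (Cu ×ˢ Cv).filter P = {(u, v)} := by
    ext ⟨x, y⟩
    simp only [Finset.mem_filter, Finset.mem_product, Finset.mem_singleton, Prod.mk.injEq, hP]
    constructor
    · rintro ⟨⟨hx, hy⟩, hadj⟩
      exact hbridge x hx y hy hadj
    · rintro ⟨rfl, rfl⟩
      exact ⟨⟨hu, hv⟩, huv⟩
  have hcross2 : (Cv ×ˢ Cu).filter P = {(v, u)} := by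
    ext ⟨x, y⟩
    simp only [Finset.mem_filter, Finset.mem_product, Finset.mem_singleton, Prod.mk.injEq, hP]
    constructor
    · rintro ⟨⟨hx, hy⟩, hadj⟩
      obtain ⟨h1, h2⟩ := hbridge y hy x hx hadj.symm
      exact ⟨h2, h1⟩
    · rintro ⟨rfl, rfl⟩
      exact ⟨⟨hv, hu⟩, huv.symm⟩
  -- decompose the product
  have hsplit : C ×ˢ C = (Cu ×ˢ Cu) ∪ ((Cu ×ˢ Cv) ∪ ((Cv ×ˢ Cu) ∪ (Cv ×ˢ Cv))) := by
    rw [← hunion]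
    ext ⟨x, y⟩
    simp only [Finset.mem_product, Finset.mem_union]
    tauto
  have hdisjP : ∀ (A B A' B' : Finset V), Disjoint A A' →
      Disjoint ((A ×ˢ B).filter P) ((A' ×ˢ B').filter P) := by
    intro A B A' B' hAB
    apply Finset.disjoint_left.mpr
    intro p hp hp'
    simp only [Finset.mem_filter, Finset.mem_product] at hp hp'
    exact Finset.disjoint_left.mp hAB hp.1.1 hp'.1.1
  have hdisjP2 : ∀ (A B A' B' : Finset V), Disjoint B B' →
      Disjoint ((A ×ˢ B).filter P) ((A' ×ˢ B').filter P) := by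
    intro A B A' B' hAB
    apply Finset.disjoint_left.mpr
    intro p hp hp'
    simp only [Finset.mem_filter, Finset.mem_product] at hp hp'
    exact Finset.disjoint_left.mp hAB hp.1.2 hp'.1.2
  have hcardC : ((C ×ˢ C).filter P).card
      = ((Cu ×ˢ Cu).filter P).card + ((Cv ×ˢ Cv).filter P).card + 2 := by
    rw [hsplit, Finset.filter_union, Finset.filter_union, Finset.filter_union]
    rw [Finset.card_union_of_disjoint, Finset.card_union_of_disjoint,
      Finset.card_union_of_disjoint]
    · rw [hcross1, hcross2]
      simp only [Finset.card_singleton]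
      ring
    · exact hdisjP2 _ _ _ _ hdisj
    · apply Finset.disjoint_union_right.mpr
      exact ⟨hdisjP _ _ _ _ hdisj, hdisjP _ _ _ _ hdisj⟩
    · apply Finset.disjoint_union_right.mpr
      refine ⟨hdisjP2 _ _ _ _ hdisj, ?_⟩
      apply Finset.disjoint_union_right.mpr
      exact ⟨hdisjP _ _ _ _ hdisj, hdisjP _ _ _ _ hdisj⟩
  have hcardsum : C.card = Cu.card + Cv.card := by
    rw [← hunion, Finset.card_union_of_disjoint hdisj]
  -- lower bounds
  have ha : Cu.card ≤ ((Cu ×ˢ Cu).filter P).card := card_le_card_adjPairs G Cu hCu hconnu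
  have hb : Cv.card ≤ ((Cv ×ˢ Cv).filter P).card := card_le_card_adjPairs G Cv hCv hconnv
  unfold uw
  rw [hcardC, hcardsum]
  push_cast
  exact uw_arith _ _ _ _ (by exact_mod_cast hCu) (by exact_mod_cast hCv)
    (by exact_mod_cast ha) (by exact_mod_cast hb)
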